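/- If M is a dual π-Rickart module satisfying condition D₂ (every submodule N of M with M/N isomorphic to a direct summand of M is itself a direct summand), then M is π-Rickart, i.e., for every f ∈ End_R(M) there exist an idempotent e and a positive integer n with Ker(f^n) = eM. -/

import Mathlib

/-- A dual π-Rickart module with the D₂ condition is π-Rickart. -/
theorem piRickart_of_dualPiRickart_of_D2
    {R M : Type*} [Ring R] [AddCommGroup M] [Module R M]
    (hdpr : ∀ f : Module.End R M, ∃ (e : Module.End R M) (n : ℕ),
      0 < n ∧ IsIdempotentElem e ∧ LinearMap.range (f ^ n) = LinearMap.range e)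
    (hD2 : ∀ N : Submodule R M,
      (∃ K P : Submodule R M, IsCompl K P ∧ Nonempty ((M ⧸ N) ≃ₗ[R] K)) →
      ∃ P : Submodule R M, IsCompl N P) :
    ∀ f : Module.End R M, ∃ (e : Module.End R M) (n : ℕ),
      0 < n ∧ IsIdempotentElem e ∧ LinearMap.ker (f ^ n) = LinearMap.range e := by
  intro f
  obtain ⟨e, n, hn, he, hr⟩ := hdpr f
  have hproj : LinearMap.IsProj (LinearMap.range e) e := by
    refine ⟨fun x => LinearMap.mem_range_self e x, fun x hx => ?_⟩
    obtain ⟨y, rfl⟩ := hx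
    rw [← LinearMap.comp_apply]
    rw [show e ∘ₗ e = e from he]
  have hcompl : IsCompl (LinearMap.range e) (LinearMap.ker e) := hproj.isCompl
  have hiso : Nonempty ((M ⧸ LinearMap.ker (f ^ n)) ≃ₗ[R] LinearMap.range e) :=
    ⟨(f ^ n).quotKerEquivRange.trans (LinearEquiv.ofEq _ _ hr)⟩
  obtain ⟨P, hP⟩ := hD2 (LinearMap.ker (f ^ n))
    ⟨LinearMap.range e, LinearMap.ker e, hcompl, hiso⟩
  set N := LinearMap.ker (f ^ n)
  refine ⟨N.subtype ∘ₗ N.projectionOnto P hP, n, hn, ?_, ?_⟩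
  · show (_ ∘ₗ _) * (_ ∘ₗ _) = _
    ext x
    simp [Module.End.mul_apply, Submodule.projectionOnto_apply_left]
  · ext x
    constructor
    · intro hx
      exact ⟨x, by simp [Submodule.projectionOnto_apply_left hP ⟨x, hx⟩]⟩
    · rintro ⟨y, rfl⟩
      exact (N.projectionOnto P hP y).2
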